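/- Let C be an abelian category, W, ν ⊆ C, and X ⊆ C be such that ν = smd(ν) is a (W∩X)-injective relative cogenerator in W∩X. Then for every M ∈ W∩X admitting a finite ν_X-coresolution, id_{W∩X}(M) = coresdim_ν^X(M); moreover W∩X∩ν_X^∨ = {M ∈ W∩X : id_{W∩X}(M) < ∞}. -/

import Mathlib

open CategoryTheory CategoryTheory.Limits

universe w v u

variable {C : Type u} [Category.{v} C] [Abelian C] [HasExt.{w} C]

/-- `Ext^i(M, N) = 0`. -/
def extZero (M N : C) (i : ℕ) : Prop := Subsingleton (Abelian.Ext M N i)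

/-- `0 → A → B → D → 0` is a short exact sequence. -/
def IsSES {A B D : C} (f : A ⟶ B) (g : B ⟶ D) : Prop :=
  ∃ w : f ≫ g = 0, (ShortComplex.mk f g w).ShortExact

/-- There exists a short exact sequence `0 → A → B → D → 0`. -/
def SES (A B D : C) : Prop := ∃ (f : A ⟶ B) (g : B ⟶ D), IsSES f g

/-- The right orthogonal class `𝒯^⊥` (vanishing of `Ext^i` for all `i > 0`). -/
def rPerp (𝒯 : Set C) : Set C := {N | ∀ M ∈ 𝒯, ∀ i, 0 < i → extZero M N i}

/-- The right `1`-st orthogonal class `𝒯^{⊥₁}`. -/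
def rPerp1 (𝒯 : Set C) : Set C := {N | ∀ M ∈ 𝒯, extZero M N 1}

/-- The left orthogonal class `⊥𝒮`. -/
def lPerp (𝒮 : Set C) : Set C := {M | ∀ N ∈ 𝒮, ∀ i, 0 < i → extZero M N i}

/-- The left `1`-st orthogonal class `⊥₁𝒮`. -/
def lPerp1 (𝒮 : Set C) : Set C := {M | ∀ N ∈ 𝒮, extZero M N 1}

/-- `α` is a relative cogenerator in `𝒳`. -/
def IsRelCogen (α 𝒳 : Set C) : Prop :=
  α ⊆ 𝒳 ∧ ∀ X ∈ 𝒳, ∃ (W X' : C), W ∈ α ∧ X' ∈ 𝒳 ∧ SES X W X'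

/-- `β` is a relative generator in `𝒳`. -/
def IsRelGen (β 𝒳 : Set C) : Prop :=
  β ⊆ 𝒳 ∧ ∀ X ∈ 𝒳, ∃ (X' W : C), W ∈ β ∧ X' ∈ 𝒳 ∧ SES X' W X

/-- `pd_𝒳(𝒯) ≤ n`. -/
def pdLE (𝒳 𝒯 : Set C) (n : ℕ) : Prop :=
  ∀ M ∈ 𝒯, ∀ X ∈ 𝒳, ∀ k, n < k → extZero M X k

/-- `𝒴` is closed by `n`-quotients in `𝒳`: for any exact sequence
`0 → K n → Y (n-1) → ⋯ → Y 0 → K 0 → 0` (encoded by its short exact pieces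
`0 → K (i+1) → Y i → K i → 0`) with all `Y i ∈ 𝒴` and all kernels `K i ∈ 𝒳`
(in particular the end terms), the end term `K 0` is in `𝒴`. -/
def ClosedByQuotients (𝒴 𝒳 : Set C) (n : ℕ) : Prop :=
  ∀ (K Y : ℕ → C),
    (∀ i < n, Y i ∈ 𝒴) →
    (∀ i ≤ n, K i ∈ 𝒳) →
    (∀ i < n, SES (K (i + 1)) (Y i) (K i)) →
    K 0 ∈ 𝒴

/-- `M` has a `𝒴_𝒳`-coresolution of length `n`, i.e. an exact sequence
`0 → M → Y 0 → ⋯ → Y (n-1) → Z n → 0` with `Z n ∈ 𝒳 ∩ 𝒴`, `Y i ∈ 𝒴`, and all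
intermediate images `Z i ∈ 𝒳`. -/
def CoresLen (𝒴 𝒳 : Set C) (M : C) (n : ℕ) : Prop :=
  ∃ (Z Y : ℕ → C), Z 0 = M ∧ Z n ∈ 𝒳 ∩ 𝒴 ∧
    (∀ i < n, Y i ∈ 𝒴) ∧ (∀ i, 0 < i → i < n → Z i ∈ 𝒳) ∧
    (∀ i < n, SES (Z i) (Y i) (Z (i + 1)))

/-- The `𝒴_𝒳`-coresolution dimension of `M`, as an extended natural number. -/
noncomputable def coresdim (𝒴 𝒳 : Set C) (M : C) : ℕ∞ :=
  sInf {e : ℕ∞ | ∃ m : ℕ, e = (m : ℕ∞) ∧ CoresLen 𝒴 𝒳 M m}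

/-- The `𝒳`-injective dimension of `M`, as an extended natural number. -/
noncomputable def relId (𝒳 : Set C) (M : C) : ℕ∞ :=
  sInf {e : ℕ∞ | ∃ m : ℕ, e = (m : ℕ∞) ∧ ∀ X ∈ 𝒳, ∀ k, m < k → extZero X M k}

/-- `𝒯` is precovering. -/
def Precovering (𝒯 : Set C) : Prop :=
  ∀ M : C, ∃ (Z : C) (f : Z ⟶ M), Z ∈ 𝒯 ∧
    ∀ (Z' : C) (h : Z' ⟶ M), Z' ∈ 𝒯 → ∃ h' : Z' ⟶ Z, h' ≫ f = h

/-- `𝒯` is preenveloping. -/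
def Preenveloping (𝒯 : Set C) : Prop :=
  ∀ M : C, ∃ (Z : C) (f : M ⟶ Z), Z ∈ 𝒯 ∧
    ∀ (Z' : C) (h : M ⟶ Z'), Z' ∈ 𝒯 → ∃ h' : Z ⟶ Z', f ≫ h' = h

/-- `𝒯 = add 𝒯`: closed under finite coproducts and under direct summands (retracts). -/
def IsAddClosed (𝒯 : Set C) : Prop :=
  (∀ A B : C, A ∈ 𝒯 → B ∈ 𝒯 → (A ⊞ B) ∈ 𝒯) ∧
  (∀ (A B : C) (i : A ⟶ B) (r : B ⟶ A), i ≫ r = 𝟙 A → B ∈ 𝒯 → A ∈ 𝒯)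

/-- Closed under direct summands (retracts). -/
def IsSmdClosed (𝒯 : Set C) : Prop :=
  ∀ (A B : C) (i : A ⟶ B) (r : B ⟶ A), i ≫ r = 𝟙 A → B ∈ 𝒯 → A ∈ 𝒯

/-- Closed under extensions. -/
def IsExtClosed (𝒯 : Set C) : Prop :=
  ∀ (A E B : C), A ∈ 𝒯 → B ∈ 𝒯 → SES A E B → E ∈ 𝒯

/-- `ℬ` is `𝒳`-coresolving: it contains an `𝒳`-injective relative cogenerator in `𝒳`,
is closed under mono-cokernels in `ℬ ∩ 𝒳`, and is closed under extensions. -/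
def IsCoresolving (ℬ 𝒳 : Set C) : Prop :=
  (∃ α : Set C, α ⊆ ℬ ∩ 𝒳 ∧ (∀ X ∈ 𝒳, ∀ A ∈ α, ∀ i, 0 < i → extZero X A i) ∧
    IsRelCogen α 𝒳) ∧
  (∀ (M M' M'' : C), M ∈ ℬ ∩ 𝒳 → M' ∈ ℬ ∩ 𝒳 → SES M M' M'' → M'' ∈ ℬ) ∧
  IsExtClosed ℬ

/-- `(𝒜, ℬ)` is a left `𝒳`-complete pair. -/
def LeftComplete (𝒜 ℬ 𝒳 : Set C) : Prop :=
  ∀ X ∈ 𝒳, ∃ B A : C, B ∈ ℬ ∩ 𝒳 ∧ A ∈ 𝒜 ∩ 𝒳 ∧ SES B A X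

/-- `(𝒜, ℬ)` is a right `𝒳`-complete pair. -/
def RightComplete (𝒜 ℬ 𝒳 : Set C) : Prop :=
  ∀ X ∈ 𝒳, ∃ B A : C, B ∈ ℬ ∩ 𝒳 ∧ A ∈ 𝒜 ∩ 𝒳 ∧ SES X B A

/-- `(𝒜, ℬ)` is an `𝒳`-hereditary pair. -/
def IsHereditary (𝒜 ℬ 𝒳 : Set C) : Prop :=
  ∀ A ∈ 𝒜 ∩ 𝒳, ∀ B ∈ ℬ ∩ 𝒳, ∀ i, 1 ≤ i → extZero A B i

/-- `M` has a (possibly infinite) `𝒴_𝒳`-coresolution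
`0 → M → Y 0 → Y 1 → ⋯` with `Y i ∈ 𝒴 ∪ {0}` and all images in `𝒳 ∪ {0}`. -/
def InfCores (𝒳 𝒴 : Set C) (M : C) : Prop :=
  ∃ (Z Y : ℕ → C), Z 0 = M ∧
    (∀ i, Y i ∈ 𝒴 ∨ IsZero (Y i)) ∧
    (∀ i, 0 < i → Z i ∈ 𝒳 ∨ IsZero (Z i)) ∧
    (∀ i, SES (Z i) (Y i) (Z (i + 1)))

/-- The class `(𝒳,𝒴)_∞^∨`. -/
def InfCoresClass (𝒳 𝒴 : Set C) : Set C := {M | M ∈ 𝒳 ∧ InfCores 𝒳 𝒴 M}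

/-- The class `(𝒳,𝒴)^∨`. -/
def FinCoresClass (𝒳 𝒴 : Set C) : Set C := {M | M ∈ 𝒳 ∧ ∃ m : ℕ, CoresLen 𝒴 𝒳 M m}


/-! ### Auxiliary material for `stmt_18` -/

universe w'

namespace Stmt18Aux

open CategoryTheory.Abelian DerivedCategory

section
variable (C) [HasDerivedCategory.{w'} C]

/-- The homology (in degree 0) of the single complex functor is the identity. -/
noncomputable def singleCompHomologyIso :
    DerivedCategory.singleFunctor C 0 ⋙ DerivedCategory.homologyFunctor C 0 ≅ 𝟭 C :=
  Functor.isoWhiskerRight ((SingleFunctors.evaluation _ _ (0 : ℤ)).mapIso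
      (DerivedCategory.singleFunctorsPostcompQIso C)) (DerivedCategory.homologyFunctor C 0) ≪≫
    Functor.associator _ _ _ ≪≫
    Functor.isoWhiskerLeft (CochainComplex.singleFunctor C 0)
      (DerivedCategory.homologyFunctorFactors C 0) ≪≫
    HomologicalComplex.homologyFunctorSingleIso C (ComplexShape.up ℤ) 0

end

section
variable [HasDerivedCategory.{w'} C]

/-- From a degree-zero Ext class to an actual morphism, via the homology functor. -/
noncomputable def ext0ToHom {X Y : C} (e : Abelian.Ext X Y 0) : X ⟶ Y :=
  (singleCompHomologyIso C).inv.app X ≫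
    (DerivedCategory.homologyFunctor C 0).map
      ((ShiftedHom.homEquiv (((0 : ℕ) : ℤ)) (by simp)).symm e.hom) ≫
    (singleCompHomologyIso C).hom.app Y

lemma ext0ToHom_mk₀ {X Y : C} (f : X ⟶ Y) : ext0ToHom (Abelian.Ext.mk₀ f) = f := by
  have h1 : (ShiftedHom.homEquiv (C := DerivedCategory C) (((0 : ℕ) : ℤ)) (by simp)).symm
      (Abelian.Ext.mk₀ f).hom = (DerivedCategory.singleFunctor C 0).map f := by
    rw [Abelian.Ext.mk₀_hom]
    exact (ShiftedHom.homEquiv (((0 : ℕ) : ℤ)) (by simp)).symm_apply_apply _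
  rw [ext0ToHom, h1]
  have := (singleCompHomologyIso C).hom.naturality f
  dsimp at this
  rw [this, Iso.inv_hom_id_app_assoc]

lemma ext0ToHom_comp {X Y Z : C} (a : Abelian.Ext X Y 0) (b : Abelian.Ext Y Z 0) :
    ext0ToHom (a.comp b (zero_add 0)) = ext0ToHom a ≫ ext0ToHom b := by
  have key : (ShiftedHom.homEquiv (C := DerivedCategory C) (((0 : ℕ) : ℤ)) (by simp)).symm
      ((a.comp b (zero_add 0)).hom) =
      (ShiftedHom.homEquiv (((0 : ℕ) : ℤ)) (by simp)).symm a.hom ≫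
        (ShiftedHom.homEquiv (((0 : ℕ) : ℤ)) (by simp)).symm b.hom := by
    rw [Abelian.Ext.comp_hom]
    obtain ⟨u, hu⟩ := (ShiftedHom.homEquiv (C := DerivedCategory C)
      (((0 : ℕ) : ℤ)) (by simp)).surjective a.hom
    rw [← hu, Equiv.symm_apply_apply]
    rw [ShiftedHom.homEquiv_apply]
    rw [ShiftedHom.mk₀_comp]
    simp only [ShiftedHom.homEquiv, Equiv.coe_fn_symm_mk, Category.assoc]
  rw [ext0ToHom, key]
  rw [Functor.map_comp]
  simp [ext0ToHom]

end

/-- A short exact sequence with `Ext¹(X₃, X₁) = 0` splits: `f` admits a retraction. -/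
lemma retraction_of_ext1_subsingleton {S : ShortComplex C} (hS : S.ShortExact)
    (h1 : Subsingleton (Abelian.Ext.{w} S.X₃ S.X₁ 1)) :
    ∃ r : S.X₂ ⟶ S.X₁, S.f ≫ r = 𝟙 S.X₁ := by
  letI := HasDerivedCategory.standard C
  obtain ⟨x₂, hx₂⟩ := Abelian.Ext.contravariant_sequence_exact₁ hS S.X₁
    (Abelian.Ext.mk₀ (𝟙 S.X₁)) rfl (Subsingleton.elim _ _)
  refine ⟨ext0ToHom x₂, ?_⟩
  have : ext0ToHom ((Abelian.Ext.mk₀ S.f).comp x₂ (zero_add 0)) =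
      ext0ToHom (Abelian.Ext.mk₀ (𝟙 S.X₁)) := by rw [hx₂]
  rwa [ext0ToHom_comp, ext0ToHom_mk₀, ext0ToHom_mk₀] at this

/-- LES step: vanishing for `X₂` at `k+1` and `X₃` at `k` gives vanishing for `X₁` at `k+1`. -/
lemma step₁ {S : ShortComplex C} (hS : S.ShortExact) (T : C) (k : ℕ)
    (h2 : Subsingleton (Abelian.Ext.{w} T S.X₂ (k + 1)))
    (h3 : Subsingleton (Abelian.Ext.{w} T S.X₃ k)) :
    Subsingleton (Abelian.Ext.{w} T S.X₁ (k + 1)) := by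
  refine subsingleton_of_forall_eq 0 fun x => ?_
  obtain ⟨x₃, hx₃⟩ := Abelian.Ext.covariant_sequence_exact₁ T hS x (Subsingleton.elim _ _) rfl
  rw [← hx₃, Subsingleton.elim x₃ 0, Abelian.Ext.zero_comp]

/-- LES step: vanishing for `X₁` at `k+1` and `X₂` at `k` gives vanishing for `X₃` at `k`. -/
lemma step₃ {S : ShortComplex C} (hS : S.ShortExact) (T : C) (k : ℕ)
    (h1 : Subsingleton (Abelian.Ext.{w} T S.X₁ (k + 1)))
    (h2 : Subsingleton (Abelian.Ext.{w} T S.X₂ k)) :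
    Subsingleton (Abelian.Ext.{w} T S.X₃ k) := by
  refine subsingleton_of_forall_eq 0 fun x => ?_
  obtain ⟨x₂, hx₂⟩ := Abelian.Ext.covariant_sequence_exact₃ T hS x rfl (Subsingleton.elim _ _)
  rw [← hx₂, Subsingleton.elim x₂ 0, Abelian.Ext.zero_comp]

/-- A finite `ν_𝒳`-coresolution of length `m` forces `Ext`-vanishing above `m`. -/
lemma vanish_of_coresLen {𝒲 𝒳 ν : Set C}
    (hinj : ∀ Z ∈ 𝒲 ∩ 𝒳, ∀ N ∈ ν, ∀ i, 0 < i → extZero Z N i)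
    {M : C} {m : ℕ} (h : CoresLen ν 𝒳 M m) :
    ∀ T ∈ 𝒲 ∩ 𝒳, ∀ k, m < k → extZero T M k := by
  obtain ⟨Z, Y, hZ0, hZm, hY, _, hses⟩ := h
  intro T hT k hk
  have key : ∀ i, i ≤ m → ∀ k, 1 ≤ k →
      Subsingleton (Abelian.Ext.{w} T (Z (m - i)) (k + i)) := by
    intro i
    induction i with
    | zero => intro _ k hk1; exact hinj T hT (Z m) hZm.2 k hk1
    | succ i ih =>
      intro hi k hk1
      have him : m - (i + 1) < m := by omega
      obtain ⟨f, g, w, hSE⟩ := hses (m - (i + 1)) him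
      have heq : m - (i + 1) + 1 = m - i := by omega
      have h2 : Subsingleton (Abelian.Ext.{w} T (Y (m - (i + 1))) (k + i + 1)) :=
        hinj T hT _ (hY _ him) _ (by omega)
      have h3 : Subsingleton (Abelian.Ext.{w} T (Z (m - (i + 1) + 1)) (k + i)) := by
        rw [heq]; exact ih (by omega) k hk1
      exact step₁ hSE T (k + i) h2 h3
  have := key m le_rfl (k - m) (by omega)
  rw [Nat.sub_self, hZ0, Nat.sub_add_cancel hk.le] at this
  exact this

/-- `Ext`-vanishing above `n` for `M ∈ 𝒲 ∩ 𝒳` yields a `ν_𝒳`-coresolution of length `n`. -/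
lemma coresLen_of_vanish {𝒲 𝒳 ν : Set C} (hsmd : IsSmdClosed ν)
    (hinj : ∀ Z ∈ 𝒲 ∩ 𝒳, ∀ N ∈ ν, ∀ i, 0 < i → extZero Z N i)
    (hcog : IsRelCogen ν (𝒲 ∩ 𝒳))
    {M : C} (hM : M ∈ 𝒲 ∩ 𝒳) (n : ℕ)
    (hvan : ∀ T ∈ 𝒲 ∩ 𝒳, ∀ k, n < k → extZero T M k) :
    CoresLen ν 𝒳 M n := by
  choose N Z' hN hZ' hses using hcog.2
  let Zc : ℕ → {A : C // A ∈ 𝒲 ∩ 𝒳} :=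
    fun i => Nat.rec ⟨M, hM⟩ (fun _ p => ⟨Z' p.1 p.2, hZ' p.1 p.2⟩) i
  have hZc0 : (Zc 0).1 = M := rfl
  have hZcS : ∀ i, (Zc (i + 1)).1 = Z' (Zc i).1 (Zc i).2 := fun i => rfl
  have van : ∀ i, ∀ T ∈ 𝒲 ∩ 𝒳, ∀ k, 1 ≤ k → n - i < k →
      Subsingleton (Abelian.Ext.{w} T (Zc i).1 k) := by
    intro i
    induction i with
    | zero => intro T hT k _ hk2; exact hvan T hT k (by omega)
    | succ i ih =>
      intro T hT k hk1 hk2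
      obtain ⟨f, g, w, hSE⟩ := hses (Zc i).1 (Zc i).2
      have h1 : Subsingleton (Abelian.Ext.{w} T (Zc i).1 (k + 1)) :=
        ih T hT (k + 1) (by omega) (by omega)
      have h2 : Subsingleton (Abelian.Ext.{w} T (N (Zc i).1 (Zc i).2) k) :=
        hinj T hT _ (hN _ _) k (by omega)
      have := step₃ hSE T k h1 h2
      rw [hZcS i]
      exact this
  -- the n-th cosyzygy is in ν
  have hZn : (Zc n).1 ∈ ν := by
    obtain ⟨f, g, w, hSE⟩ := hses (Zc n).1 (Zc n).2
    have h1 : Subsingleton (Abelian.Ext.{w} (Z' (Zc n).1 (Zc n).2) (Zc n).1 1) :=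
      van n _ (hZ' _ _) 1 le_rfl (by omega)
    obtain ⟨r, hr⟩ := retraction_of_ext1_subsingleton hSE h1
    exact hsmd _ _ f r hr (hN _ _)
  refine ⟨fun i => (Zc i).1, fun i => N (Zc i).1 (Zc i).2, hZc0, ⟨(Zc n).2.2, hZn⟩,
    fun i _ => hN _ _, fun i _ _ => (Zc i).2.2, fun i _ => ?_⟩
  obtain ⟨f, g, w, hSE⟩ := hses (Zc i).1 (Zc i).2
  show SES (Zc i).1 (N (Zc i).1 (Zc i).2) (Zc (i + 1)).1
  rw [hZcS i]
  exact ⟨f, g, w, hSE⟩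

end Stmt18Aux

/-- if `ν = smd ν` is a `(𝒲∩𝒳)`-injective relative cogenerator in
`𝒲 ∩ 𝒳`, then for every `M ∈ 𝒲 ∩ 𝒳` admitting a finite `ν_𝒳`-coresolution,
`id_{𝒲∩𝒳}(M) = coresdim_ν^𝒳(M)`; moreover
`𝒲 ∩ 𝒳 ∩ ν_𝒳^∨ = {M ∈ 𝒲 ∩ 𝒳 | id_{𝒲∩𝒳}(M) < ∞}`. -/
theorem stmt_18 (𝒲 𝒳 ν : Set C) (hsmd : IsSmdClosed ν)
    (hinj : ∀ Z ∈ 𝒲 ∩ 𝒳, ∀ N ∈ ν, ∀ i, 0 < i → extZero Z N i)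
    (hcog : IsRelCogen ν (𝒲 ∩ 𝒳)) :
    (∀ M ∈ 𝒲 ∩ 𝒳, (∃ m : ℕ, CoresLen ν 𝒳 M m) →
      relId (𝒲 ∩ 𝒳) M = coresdim ν 𝒳 M) ∧
    (𝒲 ∩ 𝒳 ∩ {M | ∃ m : ℕ, CoresLen ν 𝒳 M m} =
      {M | M ∈ 𝒲 ∩ 𝒳 ∧ relId (𝒲 ∩ 𝒳) M < ⊤}) := by
  have A : ∀ (M : C) (m : ℕ), CoresLen ν 𝒳 M m →
      ∀ T ∈ 𝒲 ∩ 𝒳, ∀ k, m < k → extZero T M k :=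
    fun M m h => Stmt18Aux.vanish_of_coresLen hinj h
  have B : ∀ M ∈ 𝒲 ∩ 𝒳, ∀ n : ℕ,
      (∀ T ∈ 𝒲 ∩ 𝒳, ∀ k, n < k → extZero T M k) → CoresLen ν 𝒳 M n :=
    fun M hM n hv => Stmt18Aux.coresLen_of_vanish hsmd hinj hcog hM n hv
  constructor
  · intro M hM _
    unfold relId coresdim
    apply congrArg sInf
    ext e
    constructor
    · rintro ⟨m, rfl, hv⟩
      exact ⟨m, rfl, B M hM m hv⟩
    · rintro ⟨m, rfl, hc⟩
      exact ⟨m, rfl, A M m hc⟩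
  · ext M
    simp only [Set.mem_inter_iff, Set.mem_setOf_eq]
    constructor
    · rintro ⟨hMWX, m, hc⟩
      refine ⟨hMWX, lt_of_le_of_lt (sInf_le ⟨m, rfl, A M m hc⟩) ?_⟩
      exact WithTop.coe_lt_top m
    · rintro ⟨hMWX, hlt⟩
      refine ⟨hMWX, ?_⟩
      have hS : {e : ℕ∞ | ∃ m : ℕ, e = (m : ℕ∞) ∧
          ∀ X ∈ 𝒲 ∩ 𝒳, ∀ k, m < k → extZero X M k}.Nonempty := by
        by_contra h
        rw [Set.not_nonempty_iff_eq_empty] at h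
        rw [relId, h, sInf_empty] at hlt
        exact lt_irrefl _ hlt
      obtain ⟨e, m, rfl, hv⟩ := hS
      exact ⟨m, B M hMWX m hv⟩
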